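/- Let K be a bounded linear operator on C[0,A] with nonnegative kernel (i.e., K maps nonnegative functions to nonnegative functions and |K u| ≤ K|u| pointwise) and ‖K‖_∞ < 1. Let ℓ ∈ C[0,A] be the unique solution of ℓ = 1 + Kℓ, where 1 denotes the constant function one. Then ‖(I − K)^{-1}‖_∞ = ‖ℓ‖_∞. -/
import Mathlib

theorem stmt9 (A : ℝ) (hA : 0 < A)
    (K : C(Set.Icc (0 : ℝ) A, ℝ) →L[ℝ] C(Set.Icc (0 : ℝ) A, ℝ)) (hK : ‖K‖ < 1)
    (hpos : ∀ u : C(Set.Icc (0 : ℝ) A, ℝ), (∀ x, 0 ≤ u x) → ∀ x, 0 ≤ (K u) x)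
    (habs : ∀ (u : C(Set.Icc (0 : ℝ) A, ℝ)) (x), |(K u) x| ≤ (K |u|) x)
    (ℓ : C(Set.Icc (0 : ℝ) A, ℝ)) (hℓ : ℓ = 1 + K ℓ) :
    ∀ B : C(Set.Icc (0 : ℝ) A, ℝ) →L[ℝ] C(Set.Icc (0 : ℝ) A, ℝ),
      B ∘L (1 - K) = 1 → (1 - K) ∘L B = 1 → ‖B‖ = ‖ℓ‖ := by
  intro B hBl hBr
  haveI : Fact ((0:ℝ) ≤ A) := ⟨le_of_lt hA⟩
  haveI : Nonempty (Set.Icc (0 : ℝ) A) := ⟨⟨0, by constructor <;> [rfl; exact le_of_lt hA]⟩⟩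
  -- positivity and monotonicity of powers of K
  have hposn : ∀ (n : ℕ) (v : C(Set.Icc (0 : ℝ) A, ℝ)), (∀ x, 0 ≤ v x) → ∀ x, 0 ≤ ((K ^ n) v) x := by
    intro n
    induction n with
    | zero => intro v hv x; simpa using hv x
    | succ n ih =>
      intro v hv x
      rw [pow_succ, ContinuousLinearMap.mul_apply]
      exact ih (K v) (hpos v hv) x
  have hmonon : ∀ (n : ℕ) (v w : C(Set.Icc (0 : ℝ) A, ℝ)), (∀ x, v x ≤ w x) → ∀ x,
      ((K ^ n) v) x ≤ ((K ^ n) w) x := by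
    intro n v w hvw x
    have h0 : ∀ y, 0 ≤ (w - v) y := by intro y; simpa using sub_nonneg.mpr (hvw y)
    have h1 := hposn n (w - v) h0 x
    rw [map_sub] at h1
    have h2 : 0 ≤ ((K ^ n) w) x - ((K ^ n) v) x := by simpa using h1
    linarith
  have habsn : ∀ (n : ℕ) (v : C(Set.Icc (0 : ℝ) A, ℝ)) (x : Set.Icc (0 : ℝ) A), |((K ^ n) v) x| ≤ ((K ^ n) |v|) x := by
    intro n
    induction n with
    | zero => intro v x; simp
    | succ n ih =>
      intro v x
      rw [pow_succ, ContinuousLinearMap.mul_apply]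
      calc |((K ^ n) (K v)) x| ≤ ((K ^ n) |K v|) x := ih (K v) x
        _ ≤ ((K ^ n) (K |v|)) x := hmonon n _ _ (fun y => habs v y) x
  -- norm bound for powers
  have hnormn : ∀ (n : ℕ) (w : C(Set.Icc (0 : ℝ) A, ℝ)), ‖(K ^ n) w‖ ≤ ‖K‖ ^ n * ‖w‖ := by
    intro n
    induction n with
    | zero => intro w; simp
    | succ n ih =>
      intro w
      rw [pow_succ', ContinuousLinearMap.mul_apply]
      calc ‖K ((K ^ n) w)‖ ≤ ‖K‖ * ‖(K ^ n) w‖ := K.le_opNorm _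
        _ ≤ ‖K‖ * (‖K‖ ^ n * ‖w‖) :=
            mul_le_mul_of_nonneg_left (ih w) (norm_nonneg K)
        _ = ‖K‖ ^ (n + 1) * ‖w‖ := by ring
  -- fixed point identity for B
  have hfix : ∀ v : C(Set.Icc (0 : ℝ) A, ℝ), B v = v + K (B v) := by
    intro v
    have h := congrArg (fun T : C(Set.Icc (0 : ℝ) A, ℝ) →L[ℝ] C(Set.Icc (0 : ℝ) A, ℝ) => T v) hBr
    simp only [ContinuousLinearMap.comp_apply, ContinuousLinearMap.sub_apply,
      ContinuousLinearMap.one_apply] at h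
    exact eq_add_of_sub_eq h
  -- iterated identity
  have hiter : ∀ (v : C(Set.Icc (0 : ℝ) A, ℝ)) (n : ℕ),
      B v = (∑ k ∈ Finset.range n, (K ^ k)) v + (K ^ n) (B v) := by
    intro v n
    induction n with
    | zero => simp
    | succ n ih =>
      rw [Finset.sum_range_succ, ContinuousLinearMap.add_apply]
      calc B v = (∑ k ∈ Finset.range n, (K ^ k)) v + (K ^ n) (B v) := ih
        _ = (∑ k ∈ Finset.range n, (K ^ k)) v + (K ^ n) (v + K (B v)) := by
            rw [← hfix v]
        _ = (∑ k ∈ Finset.range n, (K ^ k)) v + ((K ^ n) v + (K ^ n) (K (B v))) := by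
            rw [map_add]
        _ = (∑ k ∈ Finset.range n, (K ^ k)) v + (K ^ n) v + (K ^ (n + 1)) (B v) := by
            rw [pow_succ, ContinuousLinearMap.mul_apply]; abel
  -- pointwise version with scalar partial sums
  have hiterx : ∀ (v : C(Set.Icc (0 : ℝ) A, ℝ)) (x : Set.Icc (0 : ℝ) A) (n : ℕ),
      B v x = (∑ k ∈ Finset.range n, ((K ^ k) v) x) + ((K ^ n) (B v)) x := by
    intro v x n
    have h := congrArg (fun f : C(Set.Icc (0 : ℝ) A, ℝ) => f x) (hiter v n)
    simpa [ContinuousLinearMap.sum_apply, ContinuousMap.sum_apply] using h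
  -- tail tends to zero
  have htail : ∀ (w : C(Set.Icc (0 : ℝ) A, ℝ)) (x : Set.Icc (0 : ℝ) A),
      Filter.Tendsto (fun n : ℕ => ((K ^ n) w) x) Filter.atTop (nhds 0) := by
    intro w x
    have h0 : Filter.Tendsto (fun n : ℕ => ‖K‖ ^ n * ‖w‖) Filter.atTop (nhds 0) := by
      have h1 : Filter.Tendsto (fun n : ℕ => ‖K‖ ^ n) Filter.atTop (nhds 0) :=
        tendsto_pow_atTop_nhds_zero_of_abs_lt_one
          (by rwa [abs_of_nonneg (norm_nonneg K)])
      simpa using h1.mul_const ‖w‖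
    refine squeeze_zero_norm (fun n => ?_) h0
    exact (ContinuousMap.norm_coe_le_norm _ x).trans (hnormn n w)
  -- partial sums converge pointwise to B v
  have hconv : ∀ (v : C(Set.Icc (0 : ℝ) A, ℝ)) (x : Set.Icc (0 : ℝ) A),
      Filter.Tendsto (fun n : ℕ => ∑ k ∈ Finset.range n, ((K ^ k) v) x)
        Filter.atTop (nhds (B v x)) := by
    intro v x
    have h1 : Filter.Tendsto (fun n : ℕ => B v x - ((K ^ n) (B v)) x)
        Filter.atTop (nhds (B v x - 0)) :=
      (tendsto_const_nhds).sub (htail (B v) x)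
    rw [sub_zero] at h1
    refine h1.congr (fun n => ?_)
    rw [hiterx v x n]; ring
  -- ℓ = B 1
  have hℓB : ℓ = B 1 := by
    have h1 : (1 - K) ℓ = 1 := by
      rw [ContinuousLinearMap.sub_apply, ContinuousLinearMap.one_apply]
      nth_rewrite 1 [hℓ]
      abel
    calc ℓ = (B ∘L (1 - K)) ℓ := by rw [hBl]; rfl
      _ = B ((1 - K) ℓ) := rfl
      _ = B 1 := by rw [h1]
  -- ℓ is nonnegative
  have hone : ∀ (k : ℕ) (x : Set.Icc (0 : ℝ) A), 0 ≤ ((K ^ k) (1 : C(Set.Icc (0 : ℝ) A, ℝ))) x :=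
    fun k x => hposn k 1 (fun y => by simp) x
  have hℓpos : ∀ x : Set.Icc (0 : ℝ) A, 0 ≤ ℓ x := by
    intro x
    have h1 : Filter.Tendsto (fun n : ℕ => ∑ k ∈ Finset.range n, ((K ^ k) (1 : C(Set.Icc (0 : ℝ) A, ℝ))) x)
        Filter.atTop (nhds (ℓ x)) := by rw [hℓB]; exact hconv 1 x
    exact ge_of_tendsto' h1 (fun n => Finset.sum_nonneg (fun k _ => hone k x))
  -- partial sums of (K^k 1) x are bounded by ℓ x
  have hpartial : ∀ (n : ℕ) (x : Set.Icc (0 : ℝ) A),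
      (∑ k ∈ Finset.range n, ((K ^ k) (1 : C(Set.Icc (0 : ℝ) A, ℝ))) x) ≤ ℓ x := by
    intro n x
    have h1 := hiterx 1 x n
    rw [← hℓB] at h1
    have h2 : 0 ≤ ((K ^ n) ℓ) x := hposn n ℓ hℓpos x
    linarith
  -- upper bound
  have hub : ‖B‖ ≤ ‖ℓ‖ := by
    apply ContinuousLinearMap.opNorm_le_bound _ (norm_nonneg ℓ)
    intro v
    rw [ContinuousMap.norm_le _ (by positivity)]
    intro x
    have key : ∀ n : ℕ, |∑ k ∈ Finset.range n, ((K ^ k) v) x| ≤ ‖v‖ * ℓ x := by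
      intro n
      calc |∑ k ∈ Finset.range n, ((K ^ k) v) x|
          ≤ ∑ k ∈ Finset.range n, |((K ^ k) v) x| := Finset.abs_sum_le_sum_abs _ _
        _ ≤ ∑ k ∈ Finset.range n, ‖v‖ * ((K ^ k) (1 : C(Set.Icc (0 : ℝ) A, ℝ))) x := by
            refine Finset.sum_le_sum (fun k _ => ?_)
            refine (habsn k v x).trans ?_
            have h1 : ∀ y : Set.Icc (0 : ℝ) A, |v| y ≤ (‖v‖ • (1 : C(Set.Icc (0 : ℝ) A, ℝ))) y := by
              intro y
              simp only [ContinuousMap.abs_apply, ContinuousMap.smul_apply,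
                ContinuousMap.one_apply, smul_eq_mul, mul_one]
              exact (ContinuousMap.norm_coe_le_norm v y : ‖v y‖ ≤ ‖v‖)
            have h2 := hmonon k _ _ h1 x
            rw [map_smul] at h2
            simpa [smul_eq_mul] using h2
        _ = ‖v‖ * ∑ k ∈ Finset.range n, ((K ^ k) (1 : C(Set.Icc (0 : ℝ) A, ℝ))) x := by
            rw [Finset.mul_sum]
        _ ≤ ‖v‖ * ℓ x :=
            mul_le_mul_of_nonneg_left (hpartial n x) (norm_nonneg v)
    have habs' : Filter.Tendsto (fun n : ℕ => |∑ k ∈ Finset.range n, ((K ^ k) v) x|)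
        Filter.atTop (nhds |B v x|) := (hconv v x).abs
    have h3 : |B v x| ≤ ‖v‖ * ℓ x := le_of_tendsto' habs' key
    calc ‖B v x‖ = |B v x| := rfl
      _ ≤ ‖v‖ * ℓ x := h3
      _ ≤ ‖v‖ * ‖ℓ‖ := by
          have : ℓ x ≤ ‖ℓ‖ := (le_abs_self _).trans (ContinuousMap.norm_coe_le_norm ℓ x)
          exact mul_le_mul_of_nonneg_left this (norm_nonneg v)
      _ = ‖ℓ‖ * ‖v‖ := mul_comm _ _
  -- lower bound
  have hlb : ‖ℓ‖ ≤ ‖B‖ := by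
    rw [hℓB]
    calc ‖B 1‖ ≤ ‖B‖ * ‖(1 : C(Set.Icc (0 : ℝ) A, ℝ))‖ := B.le_opNorm 1
      _ = ‖B‖ := by rw [norm_one, mul_one]
  linarith
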